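/- One-to-one operational correspondence between the CK machine and its HOcore translation: if C -> C' in the CK machine, then [[C]] --tau--> [[C']]; and if [[C]] --tau--> P, then there exists a CK configuration C' such that P = [[C']]. -/

import Mathlib

/-! ### HOcore: syntax, LTS, barbs, barbed bisimilarity -/

/-- Channel names of HOcore. -/
abbrev Name := ℕ

/-- HOcore processes, with de Bruijn indices for process variables. -/
inductive Proc : Type
  | nil : Proc
  | pvar : ℕ → Proc
  | par : Proc → Proc → Proc
  | inp : Name → Proc → Proc
  | out : Name → Proc → Proc
  deriving DecidableEq

namespace Proc

/-- Shift the free de Bruijn indices `≥ k` by `d`. -/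
def lift (d : ℕ) : ℕ → Proc → Proc
  | _, nil => nil
  | k, pvar n => if n < k then pvar n else pvar (n + d)
  | k, par P Q => par (lift d k P) (lift d k Q)
  | k, inp a P => inp a (lift d (k + 1) P)
  | k, out a P => out a (lift d k P)

/-- Capture-avoiding substitution of `S` for the de Bruijn index `k` in `P`. -/
def subst : Proc → ℕ → Proc → Proc
  | nil, _, _ => nil
  | pvar n, k, S => if n = k then lift k 0 S else if k < n then pvar (n - 1) else pvar n
  | par P Q, k, S => par (subst P k S) (subst Q k S)
  | inp a P, k, S => inp a (subst P (k + 1) S)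
  | out a P, k, S => out a (subst P k S)

/-- Free channel names of a process. -/
def fnames : Proc → Finset Name
  | nil => ∅
  | pvar _ => ∅
  | par P Q => fnames P ∪ fnames Q
  | inp a P => insert a (fnames P)
  | out a P => insert a (fnames P)

end Proc

/-- Labels of the HOcore LTS: internal step, output, input. -/
inductive Label
  | tau : Label
  | outl : Name → Proc → Label
  | inl : Name → Proc → Label

/-- Structural congruence: parallel composition is associative, commutative,
and has `nil` as a neutral element. -/
inductive SCong : Proc → Proc → Prop
  | refl (P) : SCong P P
  | symm {P Q} : SCong P Q → SCong Q P
  | trans {P Q R} : SCong P Q → SCong Q R → SCong P R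
  | parComm (P Q) : SCong (.par P Q) (.par Q P)
  | parAssoc (P Q R) : SCong (.par (.par P Q) R) (.par P (.par Q R))
  | parNil (P) : SCong (.par P .nil) P
  | parCong {P P' Q Q'} : SCong P P' → SCong Q Q' → SCong (.par P Q) (.par P' Q')
  | inpCong {P P'} (a) : SCong P P' → SCong (.inp a P) (.inp a P')
  | outCong {P P'} (a) : SCong P P' → SCong (.out a P) (.out a P')

/-- The labeled transition system of HOcore (processes are considered up to
structural congruence). -/
inductive Step : Proc → Label → Proc → Prop
  | outS (a P) : Step (.out a P) (.outl a P) .nil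
  | inpS (a Q P) : Step (.inp a Q) (.inl a P) (Q.subst 0 P)
  | parL {P l P'} (Q) : Step P l P' → Step (.par P Q) l (.par P' Q)
  | parR {Q l Q'} (P) : Step Q l Q' → Step (.par P Q) l (.par P Q')
  | comm1 {P Q P' Q' a R} : Step P (.outl a R) P' → Step Q (.inl a R) Q' →
      Step (.par P Q) .tau (.par P' Q')
  | comm2 {P Q P' Q' a R} : Step P (.inl a R) P' → Step Q (.outl a R) Q' →
      Step (.par P Q) .tau (.par P' Q')
  | struct {P P' l Q Q'} : SCong P P' → Step P' l Q' → SCong Q' Q → Step P l Q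

/-- One internal step. -/
def TauStep (P Q : Proc) : Prop := Step P Label.tau Q

/-- Weak internal transition `==tau==>`. -/
def WTau : Proc → Proc → Prop := Relation.ReflTransGen TauStep

/-- Observables: input on a name, or output on a name (a coname). -/
inductive Barb
  | inb : Name → Barb
  | outb : Name → Barb
  deriving DecidableEq

/-- Strong observable action w.r.t. a set `H` of hidden names. -/
def StrongBarb (H : Set Name) (P : Proc) : Barb → Prop
  | .inb a => a ∉ H ∧ ∃ Q R, Step P (Label.inl a Q) R
  | .outb a => a ∉ H ∧ ∃ Q R, Step P (Label.outl a Q) R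

/-- Weak observable action w.r.t. a set `H` of hidden names. -/
def WeakBarb (H : Set Name) (P : Proc) (α : Barb) : Prop :=
  ∃ P', WTau P P' ∧ StrongBarb H P' α

/-- Barbed bisimulation w.r.t. the hidden names `H`. -/
def IsBarbedBisim (H : Set Name) (R : Proc → Proc → Prop) : Prop :=
  Symmetric R ∧ ∀ P Q, R P Q →
    (∀ α, StrongBarb H P α → WeakBarb H Q α) ∧
    (∀ S : Proc, ((S.fnames : Set Name) ∩ H = ∅) → R (.par P S) (.par Q S)) ∧
    (∀ P', Step P Label.tau P' → ∃ Q', WTau Q Q' ∧ R P' Q')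

/-- Barbed equivalence w.r.t. the hidden names `H`. -/
def BarbedEquiv (H : Set Name) (P Q : Proc) : Prop :=
  ∃ R, IsBarbedBisim H R ∧ R P Q
/-! ### The call-by-value lambda-calculus (closed) and the CK machine -/

/-- Call-by-value lambda-terms with de Bruijn indices. -/
inductive CTm
  | bvar : ℕ → CTm
  | lam : CTm → CTm
  | app : CTm → CTm → CTm
  deriving DecidableEq

namespace CTm

/-- Shift the de Bruijn indices `≥ k` by `d`. -/
def liftC (d : ℕ) : ℕ → CTm → CTm
  | k, bvar n => if n < k then bvar n else bvar (n + d)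
  | k, lam t => lam (liftC d (k + 1) t)
  | k, app t s => app (liftC d k t) (liftC d k s)

/-- Capture-avoiding substitution of `s` for the de Bruijn index `k`. -/
def substC : CTm → ℕ → CTm → CTm
  | bvar n, k, s => if n = k then liftC k 0 s else if k < n then bvar (n - 1) else bvar n
  | lam t, k, s => lam (substC t (k + 1) s)
  | app t u, k, s => app (substC t k s) (substC u k s)

/-- All de Bruijn indices point below `k`. -/
def ClosedUnder : ℕ → CTm → Prop
  | k, bvar n => n < k
  | k, lam t => ClosedUnder (k + 1) t
  | k, app t s => ClosedUnder k t ∧ ClosedUnder k s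

end CTm

/-- Values: variables and lambda-abstractions. -/
def CIsVal : CTm → Prop
  | .app _ _ => False
  | _ => True

/-- Stack items: an argument `arg(t)` or an already evaluated function `fun(v)`. -/
inductive CItem
  | argI : CTm → CItem
  | funI : CTm → CItem

/-- Stacks of the CK machine. -/
abbrev CStack := List CItem

/-- Configurations of the CK machine: evaluation mode `<t | π>` and
continuation mode `<π | v>`. -/
inductive CKConf
  | ev : CTm → CStack → CKConf
  | cont : CStack → CTm → CKConf

/-- Transitions of the CK machine. -/
inductive CKStep : CKConf → CKConf → Prop
  | fn {t s π} : CKStep (.ev (.app t s) π) (.ev t (.argI s :: π))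
  | switch {v π} : CIsVal v → CKStep (.ev v π) (.cont π v)
  | arg {t π v} : CKStep (.cont (.argI t :: π) v) (.ev t (.funI v :: π))
  | beta {t π v} : CKStep (.cont (.funI (.lam t) :: π) v) (.ev (t.substC 0 v) π)

def CItemClosed : CItem → Prop
  | .argI t => CTm.ClosedUnder 0 t
  | .funI v => CTm.ClosedUnder 0 v ∧ CIsVal v

def CStackClosed (π : CStack) : Prop := ∀ i ∈ π, CItemClosed i

/-- Closed CK configurations. -/
def CKClosed : CKConf → Prop
  | .ev t π => CTm.ClosedUnder 0 t ∧ CStackClosed π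
  | .cont π v => CStackClosed π ∧ CTm.ClosedUnder 0 v ∧ CIsVal v

/-! ### Translation of the CK machine into HOcore -/

def cN : Name := 0
def valN : Name := 1
def bN : Name := 2

/-- `Fun(P, Q) = P || c!<Q>`. -/
def FunP (P Q : Proc) : Proc := .par P (.out cN Q)

/-- `Arg(P, Q) = val(x).(P || c!<Fun(x, Q)>)`. -/
def ArgP (P Q : Proc) : Proc :=
  .inp valN (.par (P.lift 1 0) (.out cN (FunP (.pvar 0) (Q.lift 1 0))))

/-- Translation `[[t]]` of terms. -/
def trC : CTm → Proc
  | .bvar n => .inp cN (.par (.pvar 0) (.out valN (.pvar (n + 1))))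
  | .lam t => .inp cN (.par (.pvar 0) (.out valN ((Proc.inp valN (trC t)).lift 1 0)))
  | .app t s =>
      .inp cN (.par ((trC t).lift 1 0) (.out cN (ArgP ((trC s).lift 1 0) (.pvar 0))))

/-- Translation `(v)` of values. -/
def trV : CTm → Proc
  | .bvar n => .pvar n
  | .lam t => .inp valN (trC t)
  | .app _ _ => .nil

/-- Translation of CK stacks. -/
def trSt : CStack → Proc
  | [] => .out bN .nil
  | .argI t :: π => ArgP (trC t) (trSt π)
  | .funI v :: π => FunP (trV v) (trSt π)

/-- Translation of CK configurations. -/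
def trCK : CKConf → Proc
  | .ev t π => .par (trC t) (.out cN (trSt π))
  | .cont π v => .par (trSt π) (.out valN (trV v))


/-! ### Auxiliary lemmas -/

namespace Aux

open Proc

/-- Step without the struct rule. -/
inductive Step0 : Proc → Label → Proc → Prop
  | outS (a P) : Step0 (.out a P) (.outl a P) .nil
  | inpS (a Q P) : Step0 (.inp a Q) (.inl a P) (Q.subst 0 P)
  | parL {P l P'} (Q) : Step0 P l P' → Step0 (.par P Q) l (.par P' Q)
  | parR {Q l Q'} (P) : Step0 Q l Q' → Step0 (.par P Q) l (.par P Q')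
  | comm1 {P Q P' Q' a R} : Step0 P (.outl a R) P' → Step0 Q (.inl a R) Q' →
      Step0 (.par P Q) .tau (.par P' Q')
  | comm2 {P Q P' Q' a R} : Step0 P (.inl a R) P' → Step0 Q (.outl a R) Q' →
      Step0 (.par P Q) .tau (.par P' Q')

/-- Label equality up to SCong of payloads. -/
inductive LEq : Label → Label → Prop
  | tau : LEq .tau .tau
  | outl {a R R'} : SCong R R' → LEq (.outl a R) (.outl a R')
  | inl {a R R'} : SCong R R' → LEq (.inl a R) (.inl a R')

lemma LEq.refl : ∀ l, LEq l l
  | .tau => .tau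
  | .outl _ _ => .outl (SCong.refl _)
  | .inl _ _ => .inl (SCong.refl _)

lemma LEq.trans : ∀ {l₁ l₂ l₃}, LEq l₁ l₂ → LEq l₂ l₃ → LEq l₁ l₃
  | _, _, _, .tau, .tau => .tau
  | _, _, _, .outl h, .outl h' => .outl (h.trans h')
  | _, _, _, .inl h, .inl h' => .inl (h.trans h')

lemma step0_step {P l Q} (h : Step0 P l Q) : Step P l Q := by
  induction h with
  | outS a P => exact .outS a P
  | inpS a Q P => exact .inpS a Q P
  | parL Q _ ih => exact .parL Q ih
  | parR P _ ih => exact .parR P ih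
  | comm1 _ _ ih1 ih2 => exact .comm1 ih1 ih2
  | comm2 _ _ ih1 ih2 => exact .comm2 ih1 ih2

lemma lift_zero (P : Proc) : ∀ k, P.lift 0 k = P := by
  induction P <;> intro k <;> simp [Proc.lift, *]

lemma substLift (S : Proc) (P : Proc) : ∀ j, (P.lift 1 j).subst j S = P := by
  induction P <;> intro j
  case nil => simp [Proc.lift, Proc.subst]
  case pvar n =>
    by_cases h : n < j
    · simp [Proc.lift, Proc.subst, h, show n ≠ j by omega, show ¬ j < n by omega]
    · have h1 : ¬ (n + 1 = j) := by omega
      have h2 : j < n + 1 := by omega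
      simp [Proc.lift, Proc.subst, h, h1, h2]
  case par _ _ ih1 ih2 => simp [Proc.lift, Proc.subst, ih1, ih2]
  case inp _ _ ih => simp [Proc.lift, Proc.subst, ih]
  case out _ _ ih => simp [Proc.lift, Proc.subst, ih]

/-- lift commutation: `m ≤ j`. -/
lemma lift_comm (d : ℕ) (P : Proc) : ∀ j m, m ≤ j →
    (P.lift 1 m).lift d (j + 1) = (P.lift d j).lift 1 m := by
  induction P <;> intro j m hm
  case nil => simp [Proc.lift]
  case pvar n =>
    by_cases h1 : n < m
    · simp [Proc.lift, h1, show n < j + 1 by omega, show n < j by omega]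
    · by_cases h2 : n < j
      · simp [Proc.lift, h1, h2, show n + 1 < j + 1 by omega, show ¬ (n + 1 < m) by omega]
      · simp [Proc.lift, h1, h2, show ¬ (n + 1 < j + 1) by omega,
          show ¬ (n + d < m) by omega]
        omega
  case par _ _ ih1 ih2 => simp [Proc.lift, ih1 j m hm, ih2 j m hm]
  case inp _ _ ih => simp [Proc.lift, ih (j+1) (m+1) (by omega)]
  case out _ _ ih => simp [Proc.lift, ih j m hm]

/-- SCong is preserved by lift. -/
lemma scong_lift {P Q} (h : SCong P Q) : ∀ d k, SCong (P.lift d k) (Q.lift d k) := by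
  induction h <;> intro d k
  case refl => exact .refl _
  case symm _ ih => exact (ih d k).symm
  case trans _ _ ih1 ih2 => exact (ih1 d k).trans (ih2 d k)
  case parComm => exact .parComm _ _
  case parAssoc => exact .parAssoc _ _ _
  case parNil P => simpa [Proc.lift] using SCong.parNil (P.lift d k)
  case parCong _ _ ih1 ih2 => exact .parCong (ih1 d k) (ih2 d k)
  case inpCong a _ ih => exact .inpCong a (ih d (k+1))
  case outCong a _ ih => exact .outCong a (ih d k)

/-- SCong is preserved by substituting into a congruent pair. -/
lemma scong_subst_left {P Q} (h : SCong P Q) : ∀ k S, SCong (P.subst k S) (Q.subst k S) := by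
  induction h <;> intro k S
  case refl => exact .refl _
  case symm _ ih => exact (ih k S).symm
  case trans _ _ ih1 ih2 => exact (ih1 k S).trans (ih2 k S)
  case parComm => exact .parComm _ _
  case parAssoc => exact .parAssoc _ _ _
  case parNil P => simpa [Proc.subst] using SCong.parNil (P.subst k S)
  case parCong _ _ ih1 ih2 => exact .parCong (ih1 k S) (ih2 k S)
  case inpCong a _ ih => exact .inpCong a (ih (k+1) S)
  case outCong a _ ih => exact .outCong a (ih k S)

/-- SCong of the substituted process. -/
lemma scong_subst_right (P : Proc) : ∀ {S S'} (_ : SCong S S') (k), SCong (P.subst k S) (P.subst k S') := by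
  induction P <;> intro S S' h k
  case nil => exact .refl _
  case pvar n =>
    by_cases h1 : n = k
    · simp [Proc.subst, h1]; exact scong_lift h _ _
    · simp [Proc.subst, h1]; split <;> exact .refl _
  case par _ _ ih1 ih2 => exact .parCong (ih1 h k) (ih2 h k)
  case inp a _ ih => exact .inpCong a (ih h (k+1))
  case out a _ ih => exact .outCong a (ih h k)


lemma inp_any {Q l Q₁} (h : Step0 Q l Q₁) :
    ∀ a R R', l = .inl a R → SCong R R' →
      ∃ Q₁', Step0 Q (.inl a R') Q₁' ∧ SCong Q₁ Q₁' := by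
  induction h with
  | outS => intro a R R' hl _; cases hl
  | inpS b B P =>
      intro a R R' hl hR; cases hl
      exact ⟨B.subst 0 R', .inpS _ _ _, scong_subst_right B hR 0⟩
  | parL Q _ ih =>
      intro a R R' hl hR
      obtain ⟨Q₁', s, c⟩ := ih a R R' hl hR
      exact ⟨_, .parL Q s, .parCong c (.refl _)⟩
  | parR P _ ih =>
      intro a R R' hl hR
      obtain ⟨Q₁', s, c⟩ := ih a R R' hl hR
      exact ⟨_, .parR P s, .parCong (.refl _) c⟩
  | comm1 _ _ => intro a R R' hl _; cases hl
  | comm2 _ _ => intro a R R' hl _; cases hl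

/-- Transfer of `Step0` transitions along a congruence. -/
def Tr (P Q : Proc) : Prop :=
  ∀ l P', Step0 P l P' → ∃ l' Q', LEq l l' ∧ Step0 Q l' Q' ∧ SCong P' Q'

lemma tr_refl (P : Proc) : Tr P P :=
  fun l P' s => ⟨l, P', LEq.refl l, s, .refl _⟩

lemma tr_trans {P Q R} (h1 : Tr P Q) (h2 : Tr Q R) : Tr P R := by
  intro l P' s
  obtain ⟨l', Q', e1, s1, c1⟩ := h1 l P' s
  obtain ⟨l'', R', e2, s2, c2⟩ := h2 l' Q' s1
  exact ⟨l'', R', e1.trans e2, s2, c1.trans c2⟩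

lemma tr_parComm (P Q : Proc) : Tr (.par P Q) (.par Q P) := by
  intro l X s
  cases s with
  | parL _ s => exact ⟨l, _, LEq.refl l, .parR _ s, .parComm _ _⟩
  | parR _ s => exact ⟨l, _, LEq.refl l, .parL _ s, .parComm _ _⟩
  | comm1 s1 s2 => exact ⟨_, _, .tau, .comm2 s2 s1, .parComm _ _⟩
  | comm2 s1 s2 => exact ⟨_, _, .tau, .comm1 s2 s1, .parComm _ _⟩

lemma tr_assoc1 (P Q R : Proc) : Tr (.par (.par P Q) R) (.par P (.par Q R)) := by
  intro l X s
  cases s with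
  | parL _ s =>
    cases s with
    | parL _ s => exact ⟨l, _, LEq.refl l, .parL _ s, .parAssoc _ _ _⟩
    | parR _ s => exact ⟨l, _, LEq.refl l, .parR _ (.parL _ s), .parAssoc _ _ _⟩
    | comm1 s1 s2 => exact ⟨_, _, .tau, .comm1 s1 (.parL _ s2), .parAssoc _ _ _⟩
    | comm2 s1 s2 => exact ⟨_, _, .tau, .comm2 s1 (.parL _ s2), .parAssoc _ _ _⟩
  | parR _ s => exact ⟨l, _, LEq.refl l, .parR _ (.parR _ s), .parAssoc _ _ _⟩
  | comm1 s1 s2 =>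
    cases s1 with
    | parL _ s => exact ⟨_, _, .tau, .comm1 s (.parR _ s2), .parAssoc _ _ _⟩
    | parR _ s => exact ⟨_, _, .tau, .parR _ (.comm1 s s2), .parAssoc _ _ _⟩
  | comm2 s1 s2 =>
    cases s1 with
    | parL _ s => exact ⟨_, _, .tau, .comm2 s (.parR _ s2), .parAssoc _ _ _⟩
    | parR _ s => exact ⟨_, _, .tau, .parR _ (.comm2 s s2), .parAssoc _ _ _⟩

lemma tr_assoc2 (P Q R : Proc) : Tr (.par P (.par Q R)) (.par (.par P Q) R) := by
  intro l X s
  cases s with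
  | parL _ s => exact ⟨l, _, LEq.refl l, .parL _ (.parL _ s), (SCong.parAssoc _ _ _).symm⟩
  | parR _ s =>
    cases s with
    | parL _ s => exact ⟨l, _, LEq.refl l, .parL _ (.parR _ s), (SCong.parAssoc _ _ _).symm⟩
    | parR _ s => exact ⟨l, _, LEq.refl l, .parR _ s, (SCong.parAssoc _ _ _).symm⟩
    | comm1 s1 s2 => exact ⟨_, _, .tau, .comm1 (.parR _ s1) s2, (SCong.parAssoc _ _ _).symm⟩
    | comm2 s1 s2 => exact ⟨_, _, .tau, .comm2 (.parR _ s1) s2, (SCong.parAssoc _ _ _).symm⟩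
  | comm1 s1 s2 =>
    cases s2 with
    | parL _ s => exact ⟨_, _, .tau, .parL _ (.comm1 s1 s), (SCong.parAssoc _ _ _).symm⟩
    | parR _ s => exact ⟨_, _, .tau, .comm1 (.parL _ s1) s, (SCong.parAssoc _ _ _).symm⟩
  | comm2 s1 s2 =>
    cases s2 with
    | parL _ s => exact ⟨_, _, .tau, .parL _ (.comm2 s1 s), (SCong.parAssoc _ _ _).symm⟩
    | parR _ s => exact ⟨_, _, .tau, .comm2 (.parL _ s1) s, (SCong.parAssoc _ _ _).symm⟩

lemma tr_nil1 (P : Proc) : Tr (.par P .nil) P := by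
  intro l X s
  cases s with
  | parL _ s => exact ⟨l, _, LEq.refl l, s, .parNil _⟩
  | parR _ s => cases s
  | comm1 _ s2 => cases s2
  | comm2 _ s2 => cases s2

lemma tr_nil2 (P : Proc) : Tr P (.par P .nil) := by
  intro l X s
  exact ⟨l, _, LEq.refl l, .parL _ s, (SCong.parNil _).symm⟩

lemma tr_parCong {P P' Q Q'} (hP : SCong P P') (hQ : SCong Q Q') (t1 : Tr P P') (t2 : Tr Q Q') :
    Tr (.par P Q) (.par P' Q') := by
  intro l X s
  cases s with
  | parL _ s =>
    obtain ⟨l', P₂, e, s', c⟩ := t1 _ _ s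
    exact ⟨l', _, e, .parL _ s', .parCong c hQ⟩
  | parR _ s =>
    obtain ⟨l', Q₂, e, s', c⟩ := t2 _ _ s
    exact ⟨l', _, e, .parR _ s', .parCong hP c⟩
  | comm1 s1 s2 =>
    obtain ⟨l₁, P₂, e₁, s₁', c₁⟩ := t1 _ _ s1
    obtain ⟨l₂, Q₂, e₂, s₂', c₂⟩ := t2 _ _ s2
    cases e₁ with
    | outl hR1 =>
      cases e₂ with
      | inl hR2 =>
        obtain ⟨Q₂', s₂'', c'⟩ := inp_any s₂' _ _ _ rfl (hR2.symm.trans hR1)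
        exact ⟨_, _, .tau, .comm1 s₁' s₂'', .parCong c₁ (c₂.trans c')⟩
  | comm2 s1 s2 =>
    obtain ⟨l₁, P₂, e₁, s₁', c₁⟩ := t1 _ _ s1
    obtain ⟨l₂, Q₂, e₂, s₂', c₂⟩ := t2 _ _ s2
    cases e₁ with
    | inl hR1 =>
      cases e₂ with
      | outl hR2 =>
        obtain ⟨P₂', s₁'', c'⟩ := inp_any s₁' _ _ _ rfl (hR1.symm.trans hR2)
        exact ⟨_, _, .tau, .comm2 s₁'' s₂', .parCong (c₁.trans c') c₂⟩

lemma tr_inp {B B'} (a : Name) (h : SCong B B') : Tr (.inp a B) (.inp a B') := by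
  intro l X s
  cases s with
  | inpS _ _ R => exact ⟨_, _, LEq.refl _, .inpS a B' R, scong_subst_left h 0 R⟩

lemma tr_out {B B'} (a : Name) (h : SCong B B') : Tr (.out a B) (.out a B') := by
  intro l X s
  cases s with
  | outS => exact ⟨_, _, .outl h, .outS a B', .refl _⟩

lemma step0_scong {P Q} (h : SCong P Q) : Tr P Q ∧ Tr Q P := by
  induction h with
  | refl P => exact ⟨tr_refl P, tr_refl P⟩
  | symm _ ih => exact ⟨ih.2, ih.1⟩
  | trans _ _ ih1 ih2 => exact ⟨tr_trans ih1.1 ih2.1, tr_trans ih2.2 ih1.2⟩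
  | parComm P Q => exact ⟨tr_parComm P Q, tr_parComm Q P⟩
  | parAssoc P Q R => exact ⟨tr_assoc1 P Q R, tr_assoc2 P Q R⟩
  | parNil P => exact ⟨tr_nil1 P, tr_nil2 P⟩
  | parCong h1 h2 ih1 ih2 =>
      exact ⟨tr_parCong h1 h2 ih1.1 ih2.1, tr_parCong h1.symm h2.symm ih1.2 ih2.2⟩
  | inpCong a h ih => exact ⟨tr_inp a h, tr_inp a h.symm⟩
  | outCong a h ih => exact ⟨tr_out a h, tr_out a h.symm⟩

lemma step_step0 {P l Q} (h : Step P l Q) :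
    ∃ l' Q₀, LEq l l' ∧ Step0 P l' Q₀ ∧ SCong Q₀ Q := by
  induction h with
  | outS a P => exact ⟨_, _, LEq.refl _, .outS a P, .refl _⟩
  | inpS a Q P => exact ⟨_, _, LEq.refl _, .inpS a Q P, .refl _⟩
  | parL Q _ ih =>
      obtain ⟨l', Q₀, e, s, c⟩ := ih
      exact ⟨l', _, e, .parL Q s, .parCong c (.refl _)⟩
  | parR P _ ih =>
      obtain ⟨l', Q₀, e, s, c⟩ := ih
      exact ⟨l', _, e, .parR P s, .parCong (.refl _) c⟩
  | comm1 _ _ ih1 ih2 =>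
      obtain ⟨l₁, P₀, e₁, s₁, c₁⟩ := ih1
      obtain ⟨l₂, Q₀, e₂, s₂, c₂⟩ := ih2
      cases e₁ with
      | outl hR1 =>
        cases e₂ with
        | inl hR2 =>
          obtain ⟨Q₀', s₂', c'⟩ := inp_any s₂ _ _ _ rfl (hR2.symm.trans hR1)
          exact ⟨_, _, .tau, .comm1 s₁ s₂', .parCong c₁ (c'.symm.trans c₂)⟩
  | comm2 _ _ ih1 ih2 =>
      obtain ⟨l₁, P₀, e₁, s₁, c₁⟩ := ih1
      obtain ⟨l₂, Q₀, e₂, s₂, c₂⟩ := ih2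
      cases e₁ with
      | inl hR1 =>
        cases e₂ with
        | outl hR2 =>
          obtain ⟨P₀', s₁', c'⟩ := inp_any s₁ _ _ _ rfl (hR1.symm.trans hR2)
          exact ⟨_, _, .tau, .comm2 s₁' s₂, .parCong (c'.symm.trans c₁) c₂⟩
  | struct hP _ hQ ih =>
      obtain ⟨l', Q₀, e, s, c⟩ := ih
      obtain ⟨l'', Q₀', e', s', c'⟩ := (step0_scong hP).2 _ _ s
      exact ⟨l'', Q₀', e.trans e', s', (c'.symm.trans c).trans hQ⟩

lemma step_tau_step0 {P Q} (h : Step P .tau Q) :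
    ∃ Q₀, Step0 P .tau Q₀ ∧ SCong Q₀ Q := by
  obtain ⟨l', Q₀, e, s, c⟩ := step_step0 h
  cases e
  exact ⟨Q₀, s, c⟩


lemma closed_liftC {t : CTm} : ∀ {k j : ℕ} (d : ℕ), CTm.ClosedUnder k t → k ≤ j →
    CTm.liftC d j t = t := by
  induction t with
  | bvar n => intro k j d h hk
              simp [CTm.ClosedUnder] at h
              simp [CTm.liftC, show n < j by omega]
  | lam t ih => intro k j d h hk
                simp [CTm.ClosedUnder] at h
                simp [CTm.liftC, ih d h (Nat.succ_le_succ hk)]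
  | app t s iht ihs =>
      intro k j d h hk
      simp [CTm.ClosedUnder] at h
      simp [CTm.liftC, iht d h.1 hk, ihs d h.2 hk]

lemma liftC_trC (d : ℕ) (t : CTm) : ∀ j, (trC t).lift d j = trC (CTm.liftC d j t) := by
  induction t with
  | bvar n =>
      intro j
      by_cases h : n < j
      · simp [trC, CTm.liftC, Proc.lift, h, show (0:ℕ) < j+1 by omega,
          show n+1 < j+1 by omega]
      · simp [trC, CTm.liftC, Proc.lift, h, show (0:ℕ) < j+1 by omega,
          show ¬ (n+1 < j+1) by omega, show n+1+d = n+d+1 by omega]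
  | lam t ih =>
      intro j
      simp only [trC, Proc.lift, CTm.liftC]
      rw [lift_comm d _ (j+1) 1 (by omega), ih (j+1)]
      simp [Proc.lift, show (0:ℕ) < j+1 by omega]
  | app t s iht ihs =>
      intro j
      simp only [trC, Proc.lift, CTm.liftC, ArgP, FunP]
      rw [lift_comm d (trC t) j 0 (Nat.zero_le _),
          lift_comm d ((trC s).lift 1 0) (j+1) 0 (Nat.zero_le _),
          lift_comm d (trC s) j 0 (Nat.zero_le _), iht, ihs]
      simp [Proc.lift, show (0:ℕ) < j + 1 + 1 by omega, show (1:ℕ) < j + 1 + 1 by omega]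

lemma trV_lift (v : CTm) : ∀ d j, (trV v).lift d j = trV (CTm.liftC d j v) := by
  intro d j
  cases v with
  | bvar n => by_cases h : n < j <;> simp [trV, CTm.liftC, Proc.lift, h]
  | lam t => simp [trV, CTm.liftC, Proc.lift, liftC_trC]
  | app t s => simp [trV, CTm.liftC, Proc.lift]

lemma trV_closed_lift {v : CTm} (h : CTm.ClosedUnder 0 v) (d j : ℕ) :
    (trV v).lift d j = trV v := by
  rw [trV_lift, closed_liftC d h (Nat.zero_le _)]

lemma subst_lift_comm {S : Proc} (hS : ∀ d m, S.lift d m = S) (P : Proc) :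
    ∀ k j, j ≤ k → (P.lift 1 j).subst (k+1) S = (P.subst k S).lift 1 j := by
  induction P with
  | nil => intro k j hj; simp [Proc.lift, Proc.subst]
  | pvar n =>
      intro k j hj
      by_cases h1 : n < j
      · simp [Proc.lift, Proc.subst, h1, show n ≠ k+1 by omega, show ¬ (k+1 < n) by omega,
          show n ≠ k by omega, show ¬ (k < n) by omega]
      · by_cases h2 : n = k
        · simp [Proc.lift, Proc.subst, h1, h2, hS, show ¬ k < j by omega]
        · by_cases h3 : k < n
          · simp [Proc.lift, Proc.subst, h1, show n+1 ≠ k+1 by omega, show k+1 < n+1 by omega,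
              h2, h3, show ¬ (n - 1 < j) by omega]
            omega
          · simp [Proc.lift, Proc.subst, h1, show n+1 ≠ k+1 by omega, show ¬ (k+1 < n+1) by omega,
              h2, h3]
  | par P Q ihP ihQ => intro k j hj; simp [Proc.lift, Proc.subst, ihP k j hj, ihQ k j hj]
  | inp a P ih => intro k j hj; simp [Proc.lift, Proc.subst, ih (k+1) (j+1) (by omega)]
  | out a P ih => intro k j hj; simp [Proc.lift, Proc.subst, ih k j hj]

lemma trC_val {v : CTm} (hv : CIsVal v) :
    trC v = .inp cN (.par (.pvar 0) (.out valN ((trV v).lift 1 0))) := by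
  cases v with
  | bvar n => simp [trC, trV, Proc.lift]
  | lam t => rfl
  | app t s => exact absurd hv (by simp [CIsVal])

lemma trC_subst {v : CTm} (hv : CIsVal v) (hc : CTm.ClosedUnder 0 v) (t : CTm) :
    ∀ k, (trC t).subst k (trV v) = trC (t.substC k v) := by
  have hS : ∀ d m, (trV v).lift d m = trV v := trV_closed_lift hc
  induction t with
  | bvar n =>
      intro k
      by_cases h1 : n = k
      · subst h1
        have h2 : (CTm.bvar n).substC n v = CTm.liftC n 0 v := by simp [CTm.substC]
        rw [h2, closed_liftC n hc (Nat.zero_le _), trC_val hv, hS]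
        simp [trC, Proc.subst, hS]
      · by_cases h2 : k < n
        · simp [trC, Proc.subst, CTm.substC, h1, h2, show n+1 ≠ k+1 by omega,
            show k+1 < n+1 by omega, show (0:ℕ) ≠ k+1 by omega, show ¬ (k+1 < 0) by omega,
            show n - 1 + 1 = n by omega]
        · simp [trC, Proc.subst, CTm.substC, h1, h2, show n+1 ≠ k+1 by omega,
            show ¬ (k+1 < n+1) by omega, show (0:ℕ) ≠ k+1 by omega,
            show ¬ (k+1 < 0) by omega]
  | lam t ih =>
      intro k
      simp only [trC, Proc.subst, CTm.substC, Proc.lift, Nat.zero_add]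
      rw [subst_lift_comm hS (trC t) (k+1) 1 (by omega), ih]
      simp [Proc.subst, Proc.lift, show (0:ℕ) ≠ k+1 by omega, show ¬ (k+1 < 0) by omega]
  | app t s iht ihs =>
      intro k
      simp only [trC, Proc.subst, CTm.substC, ArgP, FunP, Proc.lift, Nat.zero_add]
      rw [subst_lift_comm hS (trC t) k 0 (Nat.zero_le _),
          subst_lift_comm hS ((trC s).lift 1 0) (k+1) 0 (Nat.zero_le _),
          subst_lift_comm hS (trC s) k 0 (Nat.zero_le _), iht, ihs]
      simp [Proc.subst, Proc.lift, show (0:ℕ) ≠ k+1+1 by omega, show ¬ (k+1+1 < 0) by omega,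
        show (1:ℕ) ≠ k+1+1 by omega, show ¬ (k+1+1 < 1) by omega]


lemma double_lift_subst (S X : Proc) : ((X.lift 1 0).lift 1 0).subst 1 S = X.lift 1 0 := by
  have h := lift_comm 1 X 0 0 (Nat.le_refl 0)
  norm_num at h
  rw [← h, substLift]

lemma forward {C C'} (hc : CKClosed C) (h : CKStep C C') :
    Step (trCK C) Label.tau (trCK C') := by
  cases h with
  | @fn t s π =>
      refine Step.struct (SCong.refl _)
        (Step.comm2 (Step.inpS cN _ (trSt π)) (Step.outS cN (trSt π))) ?_
      have heq : (Proc.par ((trC t).lift 1 0)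
          (.out cN (ArgP ((trC s).lift 1 0) (.pvar 0)))).subst 0 (trSt π)
          = .par (trC t) (.out cN (ArgP (trC s) (trSt π))) := by
        simp [ArgP, FunP, Proc.subst, Proc.lift, substLift, double_lift_subst, lift_zero]
      show SCong (Proc.par _ .nil) _
      rw [heq]
      exact SCong.parNil _
  | @switch v π hv =>
      show Step (.par (trC v) (.out cN (trSt π))) Label.tau _
      rw [trC_val hv]
      refine Step.struct (SCong.refl _)
        (Step.comm2 (Step.inpS cN _ (trSt π)) (Step.outS cN (trSt π))) ?_
      have heq : (Proc.par (.pvar 0) (.out valN ((trV v).lift 1 0))).subst 0 (trSt π)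
          = .par (trSt π) (.out valN (trV v)) := by
        simp [Proc.subst, substLift, lift_zero]
      show SCong (Proc.par _ .nil) _
      rw [heq]
      exact SCong.parNil _
  | @arg t π v =>
      refine Step.struct (SCong.refl _)
        (Step.comm2 (Step.inpS valN _ (trV v)) (Step.outS valN (trV v))) ?_
      have heq : (Proc.par ((trC t).lift 1 0)
          (.out cN (FunP (.pvar 0) ((trSt π).lift 1 0)))).subst 0 (trV v)
          = .par (trC t) (.out cN (FunP (trV v) (trSt π))) := by
        simp [FunP, Proc.subst, substLift, lift_zero]
      show SCong (Proc.par _ .nil) _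
      rw [heq]
      exact SCong.parNil _
  | @beta t π v =>
      refine Step.struct (SCong.refl _)
        (Step.comm2 (Step.parL _ (Step.inpS valN (trC t) (trV v)))
          (Step.outS valN (trV v))) ?_
      rw [trC_subst hc.2.2 hc.2.1 t 0]
      exact SCong.parNil _

lemma trC_inp (t : CTm) : ∃ B, trC t = .inp cN B := by
  cases t <;> exact ⟨_, rfl⟩

lemma backward {C : CKConf} {P : Proc} (hc : CKClosed C) (h : Step (trCK C) Label.tau P) :
    ∃ C', SCong P (trCK C') := by
  obtain ⟨Q₀, s, cg⟩ := step_tau_step0 h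
  suffices hs : ∃ C', SCong Q₀ (trCK C') by
    obtain ⟨C', hC⟩ := hs
    exact ⟨C', cg.symm.trans hC⟩
  clear cg h
  cases C with
  | ev t π =>
      obtain ⟨B, hB⟩ := trC_inp t
      simp only [trCK] at s
      rw [hB] at s
      cases s with
      | parL _ s' => cases s'
      | parR _ s' => cases s'
      | comm1 s1 s2 => cases s1
      | comm2 s1 s2 =>
        cases s1
        cases s2
        cases t with
        | bvar n => simp [CKClosed, CTm.ClosedUnder] at hc
        | lam u =>
            refine ⟨.cont π (.lam u), ?_⟩
            have hB' : B = .par (.pvar 0) (.out valN ((Proc.inp valN (trC u)).lift 1 0)) := by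
              simpa [trC] using hB.symm
            rw [hB']
            have heq : (Proc.par (.pvar 0)
                (.out valN ((Proc.inp valN (trC u)).lift 1 0))).subst 0 (trSt π)
                = .par (trSt π) (.out valN (.inp valN (trC u))) := by
              simp [Proc.subst, Proc.lift, substLift, lift_zero]
            rw [heq]
            exact SCong.parNil _
        | app u w =>
            refine ⟨.ev u (.argI w :: π), ?_⟩
            have hB' : B = .par ((trC u).lift 1 0)
                (.out cN (ArgP ((trC w).lift 1 0) (.pvar 0))) := by
              simpa [trC] using hB.symm
            rw [hB']
            have heq : (Proc.par ((trC u).lift 1 0)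
                (.out cN (ArgP ((trC w).lift 1 0) (.pvar 0)))).subst 0 (trSt π)
                = .par (trC u) (.out cN (ArgP (trC w) (trSt π))) := by
              simp [ArgP, FunP, Proc.subst, Proc.lift, substLift, double_lift_subst, lift_zero]
            rw [heq]
            exact SCong.parNil _
  | cont π v =>
      cases π with
      | nil =>
          simp only [trCK, trSt] at s
          cases s with
          | parL _ s' => cases s'
          | parR _ s' => cases s'
          | comm1 s1 s2 => cases s2
          | comm2 s1 s2 => cases s1
      | cons i π' =>
          cases i with
          | argI t =>
              simp only [trCK, trSt, ArgP, FunP] at s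
              cases s with
              | parL _ s' => cases s'
              | parR _ s' => cases s'
              | comm1 s1 s2 => cases s2
              | comm2 s1 s2 =>
                  cases s1
                  cases s2
                  refine ⟨.ev t (.funI v :: π'), ?_⟩
                  have heq : (Proc.par ((trC t).lift 1 0)
                      (.out cN (.par (.pvar 0) (.out cN ((trSt π').lift 1 0))))).subst 0 (trV v)
                      = .par (trC t) (.out cN (FunP (trV v) (trSt π'))) := by
                    simp [FunP, Proc.subst, substLift, lift_zero]
                  rw [heq]
                  exact SCong.parNil _
          | funI w =>
              have hw : CItemClosed (.funI w) := hc.1 _ List.mem_cons_self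
              cases w with
              | bvar n => simp [CItemClosed, CTm.ClosedUnder] at hw
              | app _ _ => simp [CItemClosed, CIsVal] at hw
              | lam u =>
                simp only [trCK, trSt, ArgP, FunP] at s
                cases s with
                | parL _ s' =>
                    cases s' with
                    | parL _ s'' => cases s''
                    | parR _ s'' => cases s''
                    | comm1 s1 s2 => cases s1
                    | comm2 s1 s2 => cases s1; cases s2
                | parR _ s' => cases s'
                | comm1 s1 s2 => cases s2
                | comm2 s1 s2 =>
                    cases s2
                    cases s1 with
                    | parL _ s'' =>
                        cases s''
                        refine ⟨.ev (u.substC 0 v) π', ?_⟩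
                        rw [trC_subst hc.2.2 hc.2.1 u 0]
                        exact SCong.parNil _
                    | parR _ s'' => cases s''

end Aux


/-! ### Statement 15: one-to-one operational correspondence for the CK machine -/

/-- If `C -> C'` in the CK machine then `[[C]] --tau--> [[C']]`, and every
`tau`-transition of `[[C]]` reaches the translation of a configuration
(up to structural congruence). -/
theorem ck_operational_correspondence :
    (∀ C C' : CKConf, CKClosed C → CKStep C C' → Step (trCK C) Label.tau (trCK C')) ∧
    (∀ (C : CKConf) (P : Proc), CKClosed C → Step (trCK C) Label.tau P →
      ∃ C' : CKConf, SCong P (trCK C')) :=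
  ⟨fun _ _ hc h => Aux.forward hc h, fun _ _ hc h => Aux.backward hc h⟩
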